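/- Dong–Harlow–Wall commutant step: let C be a subspace of H = H_A ⊗ H_Ā with a factorization C ≅ H_a ⊗ H_ā, and O a Hermitian operator acting only on the factor H_a. Suppose that for all pure states |Ψ⟩, |Φ⟩ in C, equality of the reduced states on ā implies equality of the reduced states on Ā (i.e., Tr_a|Ψ⟩⟨Ψ| = Tr_a|Φ⟩⟨Φ| ⇒ Tr_A|Ψ⟩⟨Ψ| = Tr_A|Φ⟩⟨Φ|). Then for every operator X_Ā supported only on H_Ā and every |Φ⟩ ∈ C, ⟨Φ|[O, X_Ā]|Φ⟩ = 0. -/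

import Mathlib

open Matrix Kronecker
open scoped ComplexOrder

noncomputable def cfcH {n : Type*} [Fintype n] [DecidableEq n]
    (f : ℝ → ℝ) (A : Matrix n n ℂ) : Matrix n n ℂ :=
  if hA : A.IsHermitian then
    (hA.eigenvectorUnitary : Matrix n n ℂ) *
      Matrix.diagonal (fun i => (f (hA.eigenvalues i) : ℂ)) *
      star (hA.eigenvectorUnitary : Matrix n n ℂ)
  else 0

/-- Functional-calculus logarithm of a Hermitian matrix (0 on the kernel). -/
noncomputable def matLog {n : Type*} [Fintype n] [DecidableEq n]
    (A : Matrix n n ℂ) : Matrix n n ℂ := cfcH Real.log A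

/-- Von Neumann entropy `S(ρ) = -Tr[ρ log ρ]`. -/
noncomputable def vN {n : Type*} [Fintype n] [DecidableEq n]
    (ρ : Matrix n n ℂ) : ℝ := (-(ρ * matLog ρ).trace).re

/-- Relative entropy `S(ρ‖σ) = Tr[ρ log ρ] - Tr[ρ log σ]`. -/
noncomputable def relEnt {n : Type*} [Fintype n] [DecidableEq n]
    (ρ σ : Matrix n n ℂ) : ℝ :=
  ((ρ * matLog ρ).trace - (ρ * matLog σ).trace).re

/-- A density matrix: positive semidefinite with unit trace. -/
def IsDensity {n : Type*} [Fintype n] (ρ : Matrix n n ℂ) : Prop :=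
  ρ.PosSemidef ∧ ρ.trace = 1

/-- Partial trace over the second tensor factor. -/
noncomputable def ptrB {A B : Type*} [Fintype A] [Fintype B]
    (ρ : Matrix (A × B) (A × B) ℂ) : Matrix A A ℂ :=
  Matrix.of fun i j => ∑ b : B, ρ (i, b) (j, b)

/-- Partial trace over the first tensor factor. -/
noncomputable def ptrA {A B : Type*} [Fintype A] [Fintype B]
    (ρ : Matrix (A × B) (A × B) ℂ) : Matrix B B ℂ :=
  Matrix.of fun i j => ∑ a : A, ρ (a, i) (a, j)

section DHWAux
open NormedSpace

-- star (M v) ⬝ w = star v ⬝ Mᴴ w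
lemma aux_star_dot {m n : Type*} [Fintype m] [Fintype n] (M : Matrix m n ℂ)
    (v : n → ℂ) (w : m → ℂ) :
    star (M.mulVec v) ⬝ᵥ w = star v ⬝ᵥ (Mᴴ).mulVec w := by
  rw [Matrix.star_mulVec, ← Matrix.dotProduct_mulVec]

-- conjTranspose of kronecker with 1
lemma aux_kron_conjT {B C : Type*} [Fintype B] [Fintype C] [DecidableEq C]
    (m : Matrix B B ℂ) :
    (m ⊗ₖ (1 : Matrix C C ℂ))ᴴ = mᴴ ⊗ₖ (1 : Matrix C C ℂ) := by
  ext ⟨b, i⟩ ⟨c, j⟩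
  simp [Matrix.conjTranspose_apply, Matrix.one_apply, apply_ite]
  aesop

-- matrix of (g ⊗ 1) v
lemma aux_kron_mulVec {B C : Type*} [Fintype B] [Fintype C] [DecidableEq C]
    (g : Matrix B B ℂ) (φ : B × C → ℂ) (b : B) (i : C) :
    (g ⊗ₖ (1 : Matrix C C ℂ)).mulVec φ (b, i) = ∑ c : B, g b c * φ (c, i) := by
  simp [Matrix.mulVec, dotProduct, Fintype.sum_prod_type, Matrix.one_apply,
    mul_ite, mul_zero, mul_one]

lemma aux_ptrA_matrix {B C : Type*} [Fintype B] [Fintype C] (v : B × C → ℂ) :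
    ptrA (vecMulVec v (star v))
      = ((Matrix.of fun b c => v (b, c))ᴴ * (Matrix.of fun b c => v (b, c)))ᵀ := by
  ext i j
  simp [ptrA, Matrix.vecMulVec_apply, Matrix.mul_apply, Matrix.conjTranspose_apply,
    mul_comm]

lemma aux_ptrA_invariant {B C : Type*} [Fintype B] [DecidableEq B] [Fintype C] [DecidableEq C]
    (g : Matrix B B ℂ) (hg : gᴴ * g = 1) (φ : B × C → ℂ) :
    ptrA (vecMulVec ((g ⊗ₖ (1 : Matrix C C ℂ)).mulVec φ)
        (star ((g ⊗ₖ (1 : Matrix C C ℂ)).mulVec φ)))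
      = ptrA (vecMulVec φ (star φ)) := by
  have hm : (Matrix.of fun b c => (g ⊗ₖ (1 : Matrix C C ℂ)).mulVec φ (b, c))
      = g * (Matrix.of fun b c => φ (b, c)) := by
    ext b i
    simp [aux_kron_mulVec, Matrix.mul_apply]
  rw [aux_ptrA_matrix, aux_ptrA_matrix, hm, Matrix.conjTranspose_mul, Matrix.mul_assoc,
    ← Matrix.mul_assoc gᴴ, hg, Matrix.one_mul]

-- expectation of 1 ⊗ x depends only on ptrA
lemma aux_dot_ptrA {B C : Type*} [Fintype B] [Fintype C] [DecidableEq B]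
    (x : Matrix C C ℂ) (v : B × C → ℂ) :
    star v ⬝ᵥ ((1 : Matrix B B ℂ) ⊗ₖ x).mulVec v
      = ∑ i : C, ∑ j : C, x i j * ptrA (vecMulVec v (star v)) j i := by
  have h1 : star v ⬝ᵥ ((1 : Matrix B B ℂ) ⊗ₖ x).mulVec v
      = ∑ b : B, ∑ i : C, ∑ j : C, star (v (b, i)) * (x i j * v (b, j)) := by
    simp only [dotProduct, Matrix.mulVec, Fintype.sum_prod_type,
      Matrix.kroneckerMap_apply, Matrix.one_apply, ite_mul, one_mul, zero_mul,
      Pi.star_apply]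
    refine Finset.sum_congr rfl fun b _ => Finset.sum_congr rfl fun i _ => ?_
    rw [Finset.sum_comm]
    simp [Finset.sum_ite_eq', Finset.mul_sum]
  have h2 : ∀ i j : C, ptrA (vecMulVec v (star v)) j i
      = ∑ b : B, v (b, j) * star (v (b, i)) := by
    intro i j; simp [ptrA, Matrix.vecMulVec_apply]
  rw [h1]
  simp only [h2, Finset.mul_sum]
  rw [Finset.sum_comm]
  refine Finset.sum_congr rfl fun i _ => ?_
  rw [Finset.sum_comm]
  refine Finset.sum_congr rfl fun j _ => Finset.sum_congr rfl fun b _ => ?_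
  ring

end DHWAux

/-- Dong–Harlow–Wall commutant step: if equality of reduced states on ā implies
equality of reduced states on Ā for all code states, then any Hermitian operator
acting only on the factor a commutes, in expectation on the code subspace, with
every operator supported on Ā. -/
theorem dhw_commutant_step
    {A A' a a' : Type*} [Fintype A] [DecidableEq A] [Fintype A'] [DecidableEq A']
    [Fintype a] [DecidableEq a] [Fintype a'] [DecidableEq a']
    (V : Matrix (A × A') (a × a') ℂ) (hV : Vᴴ * V = 1)
    (o : Matrix a a ℂ) (ho : o.IsHermitian)
    (hyp : ∀ ψ φ : a × a' → ℂ, star ψ ⬝ᵥ ψ = 1 → star φ ⬝ᵥ φ = 1 →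
      ptrA (vecMulVec ψ (star ψ)) = ptrA (vecMulVec φ (star φ)) →
      ptrA (vecMulVec (V.mulVec ψ) (star (V.mulVec ψ)))
        = ptrA (vecMulVec (V.mulVec φ) (star (V.mulVec φ)))) :
    ∀ (x : Matrix A' A' ℂ) (φ : a × a' → ℂ), star φ ⬝ᵥ φ = 1 →
      star (V.mulVec φ) ⬝ᵥ
        ((V * (o ⊗ₖ (1 : Matrix a' a' ℂ)) * Vᴴ * ((1 : Matrix A A ℂ) ⊗ₖ x)
          - ((1 : Matrix A A ℂ) ⊗ₖ x) * (V * (o ⊗ₖ (1 : Matrix a' a' ℂ)) * Vᴴ)).mulVec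
          (V.mulVec φ)) = 0 
:= by
  classical
  intro x φ hφ
  letI : SeminormedRing (Matrix a a ℂ) := Matrix.linftyOpSemiNormedRing
  letI : NormedRing (Matrix a a ℂ) := Matrix.linftyOpNormedRing
  letI : NormedAlgebra ℝ (Matrix a a ℂ) := Matrix.linftyOpNormedAlgebra
  letI : SeminormedRing (Matrix (a × a') (a × a') ℂ) := Matrix.linftyOpSemiNormedRing
  letI : NormedRing (Matrix (a × a') (a × a') ℂ) := Matrix.linftyOpNormedRing
  letI : NormedAlgebra ℝ (Matrix (a × a') (a × a') ℂ) := Matrix.linftyOpNormedAlgebra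
  set K : Matrix a a ℂ := Complex.I • o with hK
  have hKH : Kᴴ = -K := by
    rw [hK, Matrix.conjTranspose_smul, ho.eq]
    simp [Complex.star_def, Complex.conj_I, neg_smul]
  set g : ℝ → Matrix a a ℂ := fun t => NormedSpace.exp (t • K) with hgdef
  have hg0 : g 0 = 1 := by simp [hgdef, NormedSpace.exp_zero]
  have hgH : ∀ t : ℝ, (g t)ᴴ = NormedSpace.exp (t • (-K)) := by
    intro t
    rw [hgdef]
    simp only
    rw [← Matrix.exp_conjTranspose]
    congr 1
    have : (t • K)ᴴ = t • Kᴴ := by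
      ext i j
      simp [Matrix.conjTranspose_apply, star_smul]
    rw [this, hKH]
  have hgu : ∀ t : ℝ, (g t)ᴴ * g t = 1 := by
    intro t
    rw [hgH t, hgdef]
    simp only
    rw [← Matrix.exp_add_of_commute _ _
      (((Commute.refl K).neg_left.smul_left t).smul_right t)]
    rw [smul_neg, neg_add_cancel, NormedSpace.exp_zero]
  have hgd : HasDerivAt g K 0 := by
    have := hasDerivAt_exp_smul_const (𝕂 := ℝ) K 0
    simp only [zero_smul, NormedSpace.exp_zero, one_mul] at this
    exact this
  have hgHd : HasDerivAt (fun t : ℝ => (g t)ᴴ) (-K) 0 := by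
    have h := hasDerivAt_exp_smul_const (𝕂 := ℝ) (-K) 0
    simp only [zero_smul, NormedSpace.exp_zero, one_mul] at h
    have he : (fun t : ℝ => (g t)ᴴ) = fun t : ℝ => NormedSpace.exp (t • (-K)) :=
      funext hgH
    rw [he]
    exact h
  -- the Kronecker lift as a continuous linear map
  let L : Matrix a a ℂ →ₗ[ℝ] Matrix (a × a') (a × a') ℂ :=
    { toFun := fun m => m ⊗ₖ (1 : Matrix a' a' ℂ)
      map_add' := fun m n => Matrix.add_kronecker m n 1
      map_smul' := fun r m => Matrix.smul_kronecker r m 1 }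
  let Lc : Matrix a a ℂ →L[ℝ] Matrix (a × a') (a × a') ℂ :=
    ⟨L, L.continuous_of_finiteDimensional⟩
  have hUd : HasDerivAt (fun t : ℝ => (g t) ⊗ₖ (1 : Matrix a' a' ℂ))
      (K ⊗ₖ (1 : Matrix a' a' ℂ)) 0 :=
    Lc.hasFDerivAt.comp_hasDerivAt 0 hgd
  have hWd : HasDerivAt (fun t : ℝ => (g t)ᴴ ⊗ₖ (1 : Matrix a' a' ℂ))
      ((-K) ⊗ₖ (1 : Matrix a' a' ℂ)) 0 :=
    Lc.hasFDerivAt.comp_hasDerivAt 0 hgHd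
  set X : Matrix (A × A') (A × A') ℂ := (1 : Matrix A A ℂ) ⊗ₖ x with hX
  set N : Matrix (a × a') (a × a') ℂ := Vᴴ * X * V with hN
  have hmulD : HasDerivAt
      (fun t : ℝ => ((g t)ᴴ ⊗ₖ (1 : Matrix a' a' ℂ)) * N * ((g t) ⊗ₖ (1 : Matrix a' a' ℂ)))
      ((-K) ⊗ₖ (1 : Matrix a' a' ℂ) * N + N * (K ⊗ₖ (1 : Matrix a' a' ℂ))) 0 := by
    have h := (hWd.mul_const N).mul hUd
    simp only [hg0, Matrix.conjTranspose_one, Matrix.one_kronecker_one, Matrix.mul_one,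
      Matrix.one_mul, mul_one, one_mul] at h
    exact h
  -- the quadratic form as a continuous linear map
  let c : Matrix (a × a') (a × a') ℂ →ₗ[ℝ] ℂ :=
    { toFun := fun P => star φ ⬝ᵥ P.mulVec φ
      map_add' := by intro P Q; simp [Matrix.add_mulVec, dotProduct_add]
      map_smul' := by intro r P; simp [Matrix.smul_mulVec, dotProduct_smul] }
  let cc : Matrix (a × a') (a × a') ℂ →L[ℝ] ℂ :=
    ⟨c, c.continuous_of_finiteDimensional⟩
  have hFd : HasDerivAt
      (fun t : ℝ => star φ ⬝ᵥ
        (((g t)ᴴ ⊗ₖ (1 : Matrix a' a' ℂ)) * N * ((g t) ⊗ₖ (1 : Matrix a' a' ℂ))).mulVec φ)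
      (star φ ⬝ᵥ ((-K) ⊗ₖ (1 : Matrix a' a' ℂ) * N + N * (K ⊗ₖ (1 : Matrix a' a' ℂ))).mulVec φ)
      0 :=
    cc.hasFDerivAt.comp_hasDerivAt 0 hmulD
  -- rewriting the quadratic form through V
  have hform : ∀ (h : Matrix a a ℂ) (v : a × a' → ℂ),
      star ((h ⊗ₖ (1 : Matrix a' a' ℂ)).mulVec v) ⬝ᵥ
          N.mulVec ((h ⊗ₖ (1 : Matrix a' a' ℂ)).mulVec v)
        = star v ⬝ᵥ ((hᴴ ⊗ₖ (1 : Matrix a' a' ℂ)) * N * (h ⊗ₖ (1 : Matrix a' a' ℂ))).mulVec v := by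
    intro h v
    rw [aux_star_dot, aux_kron_conjT, Matrix.mulVec_mulVec, Matrix.mulVec_mulVec,
      Matrix.mul_assoc]
  have hNform : ∀ w : a × a' → ℂ,
      star w ⬝ᵥ N.mulVec w = star (V.mulVec w) ⬝ᵥ X.mulVec (V.mulVec w) := by
    intro w
    rw [aux_star_dot, Matrix.mulVec_mulVec, Matrix.mulVec_mulVec, hN, Matrix.mul_assoc]
  -- constancy of the expectation along the unitary flow
  have hconst : ∀ t : ℝ,
      star φ ⬝ᵥ
        (((g t)ᴴ ⊗ₖ (1 : Matrix a' a' ℂ)) * N * ((g t) ⊗ₖ (1 : Matrix a' a' ℂ))).mulVec φ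
      = star φ ⬝ᵥ N.mulVec φ := by
    intro t
    set ψ : a × a' → ℂ := ((g t) ⊗ₖ (1 : Matrix a' a' ℂ)).mulVec φ with hψdef
    have hunit : ((g t) ⊗ₖ (1 : Matrix a' a' ℂ))ᴴ * ((g t) ⊗ₖ (1 : Matrix a' a' ℂ)) = 1 := by
      rw [aux_kron_conjT, ← Matrix.mul_kronecker_mul, hgu t, Matrix.one_mul,
        Matrix.one_kronecker_one]
    have hψnorm : star ψ ⬝ᵥ ψ = 1 := by
      rw [hψdef, aux_star_dot, Matrix.mulVec_mulVec, hunit, Matrix.one_mulVec, hφ]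
    have hpt : ptrA (vecMulVec ψ (star ψ)) = ptrA (vecMulVec φ (star φ)) :=
      aux_ptrA_invariant (g t) (hgu t) φ
    have hbig := hyp ψ φ hψnorm hφ hpt
    calc star φ ⬝ᵥ
        (((g t)ᴴ ⊗ₖ (1 : Matrix a' a' ℂ)) * N * ((g t) ⊗ₖ (1 : Matrix a' a' ℂ))).mulVec φ
        = star ψ ⬝ᵥ N.mulVec ψ := (hform (g t) φ).symm
      _ = star (V.mulVec ψ) ⬝ᵥ X.mulVec (V.mulVec ψ) := hNform ψ
      _ = star (V.mulVec φ) ⬝ᵥ X.mulVec (V.mulVec φ) := by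
          rw [hX, aux_dot_ptrA, aux_dot_ptrA, hbig]
      _ = star φ ⬝ᵥ N.mulVec φ := (hNform φ).symm
  -- derivative of a constant function is zero
  have hzero : star φ ⬝ᵥ
      ((-K) ⊗ₖ (1 : Matrix a' a' ℂ) * N + N * (K ⊗ₖ (1 : Matrix a' a' ℂ))).mulVec φ = 0 := by
    have h2 : HasDerivAt
        (fun t : ℝ => star φ ⬝ᵥ
          (((g t)ᴴ ⊗ₖ (1 : Matrix a' a' ℂ)) * N * ((g t) ⊗ₖ (1 : Matrix a' a' ℂ))).mulVec φ)
        0 0 := by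
      have he : (fun t : ℝ => star φ ⬝ᵥ
          (((g t)ᴴ ⊗ₖ (1 : Matrix a' a' ℂ)) * N * ((g t) ⊗ₖ (1 : Matrix a' a' ℂ))).mulVec φ)
          = fun _ => star φ ⬝ᵥ N.mulVec φ := funext hconst
      rw [he]
      exact hasDerivAt_const 0 _
    exact hFd.unique h2
  -- extract the commutator identity
  have hkron : K ⊗ₖ (1 : Matrix a' a' ℂ) = Complex.I • (o ⊗ₖ (1 : Matrix a' a' ℂ)) := by
    rw [hK, Matrix.smul_kronecker]
  have key : star φ ⬝ᵥ
      ((N * (o ⊗ₖ (1 : Matrix a' a' ℂ)) - (o ⊗ₖ (1 : Matrix a' a' ℂ)) * N)).mulVec φ = 0 := by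
    have hrw : (-K) ⊗ₖ (1 : Matrix a' a' ℂ) * N + N * (K ⊗ₖ (1 : Matrix a' a' ℂ))
        = Complex.I • (N * (o ⊗ₖ (1 : Matrix a' a' ℂ)) - (o ⊗ₖ (1 : Matrix a' a' ℂ)) * N) := by
      have : (-K) ⊗ₖ (1 : Matrix a' a' ℂ) = -(K ⊗ₖ (1 : Matrix a' a' ℂ)) := by
        rw [show (-K : Matrix a a ℂ) = (-1 : ℂ) • K by simp [neg_smul],
          Matrix.smul_kronecker]
        simp [neg_smul]
      rw [this, hkron]
      simp only [Matrix.neg_mul, Matrix.smul_mul, Matrix.mul_smul, smul_sub]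
      abel
    rw [hrw, Matrix.smul_mulVec, dotProduct_smul, smul_eq_mul] at hzero
    rcases mul_eq_zero.mp hzero with h | h
    · exact absurd h Complex.I_ne_zero
    · exact h
  -- final algebra
  rw [aux_star_dot, Matrix.mulVec_mulVec, Matrix.mulVec_mulVec]
  have halg : Vᴴ * (V * (o ⊗ₖ (1 : Matrix a' a' ℂ)) * Vᴴ * X
        - X * (V * (o ⊗ₖ (1 : Matrix a' a' ℂ)) * Vᴴ)) * V
      = (o ⊗ₖ (1 : Matrix a' a' ℂ)) * N - N * (o ⊗ₖ (1 : Matrix a' a' ℂ)) := by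
    rw [hN]
    simp only [Matrix.sub_mul, Matrix.mul_sub, ← Matrix.mul_assoc]
    rw [hV, Matrix.one_mul, Matrix.mul_assoc (Vᴴ * X * V * (o ⊗ₖ (1 : Matrix a' a' ℂ))) Vᴴ V,
      hV, Matrix.mul_one]
  rw [halg]
  have : (o ⊗ₖ (1 : Matrix a' a' ℂ)) * N - N * (o ⊗ₖ (1 : Matrix a' a' ℂ))
      = -((N * (o ⊗ₖ (1 : Matrix a' a' ℂ)) - (o ⊗ₖ (1 : Matrix a' a' ℂ)) * N)) := by
    abel
  rw [this, Matrix.neg_mulVec, dotProduct_neg, key, neg_zero]
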